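/- arXiv:2002.05830 — 3 statements merged into one kernel-verified Lean document; each statement's English description precedes it below -/
import Mathlib

section
/- (Quadratic phase in the L²-critical case, key step of Proposition 2.9) Let d > 2 be a real number, a ∈ ℝ, and let W, θ : (0,∞) → ℝ be differentiable with W(ξ) > 0 for all ξ > 0. Suppose the function ξ ↦ ξ^{d−1}·W(ξ)²·( θ'(ξ) + (a/2)·ξ ) has derivative zero on (0,∞) (this is the θ-equation of the amplitude–phase system when σ·d = 2, since then 2/σ − 1 = d − 1 and the second term vanishes), and that ξ^{d−1}·W(ξ)²·( θ'(ξ) + (a/2)·ξ ) → 0 as ξ → 0⁺. Then θ'(ξ) = −(a/2)·ξ for all ξ > 0; consequently θ(ξ) = θ(ξ₀) + a·ξ₀²/4 − a·ξ²/4 for any ξ, ξ₀ > 0, i.e. the phase of the profile is the quadratic phase −aξ²/4 up to an additive constant. -/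
open Set Filter

noncomputable section

/-- If `f` has derivative zero at every point of `(0,∞)`, then `f` is constant there. -/
lemma const_of_deriv_zero_Ioi (f : ℝ → ℝ)
    (hf : ∀ ξ > (0 : ℝ), HasDerivAt f 0 ξ) :
    ∀ x > (0 : ℝ), ∀ y > (0 : ℝ), f x = f y := by
  have key : ∀ x y : ℝ, 0 < x → x ≤ y → f y = f x := by
    intro x y hx hxy
    have hcont : ContinuousOn f (Icc x y) := fun t ht =>
      ((hf t (lt_of_lt_of_le hx ht.1)).continuousAt).continuousWithinAt
    have hderiv : ∀ t ∈ Ico x y, HasDerivWithinAt f 0 (Ici t) t := fun t ht =>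
      (hf t (lt_of_lt_of_le hx ht.1)).hasDerivWithinAt
    exact constant_of_has_deriv_right_zero hcont hderiv y (right_mem_Icc.2 hxy)
  intro x hx y hy
  rcases le_total x y with h | h
  · exact (key x y hx h).symm
  · exact key y x hy h

/-- Quadratic phase in the L²-critical case (key step of Proposition 2.9): if
`ξ^{d-1} W(ξ)² (θ'(ξ) + (a/2)ξ)` has derivative zero on `(0,∞)` and tends to `0`
as `ξ → 0⁺`, then `θ'(ξ) = -(a/2)ξ` for all `ξ > 0`, and consequently the phase is the
quadratic phase `-aξ²/4` up to an additive constant. -/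
theorem critical_quadratic_phase
    (d a : ℝ) (hd : 2 < d) (W θ : ℝ → ℝ)
    (hW : ∀ ξ > (0 : ℝ), DifferentiableAt ℝ W ξ)
    (hθ : ∀ ξ > (0 : ℝ), DifferentiableAt ℝ θ ξ)
    (hWpos : ∀ ξ > (0 : ℝ), 0 < W ξ)
    (hF : ∀ ξ > (0 : ℝ),
      HasDerivAt (fun t => t ^ (d - 1) * W t ^ 2 * (deriv θ t + a / 2 * t)) 0 ξ)
    (hF0 : Filter.Tendsto (fun t => t ^ (d - 1) * W t ^ 2 * (deriv θ t + a / 2 * t))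
      (nhdsWithin 0 (Set.Ioi 0)) (nhds 0)) :
    (∀ ξ > (0 : ℝ), deriv θ ξ = -(a / 2) * ξ) ∧
      (∀ ξ > (0 : ℝ), ∀ ξ₀ > (0 : ℝ),
        θ ξ = θ ξ₀ + a * ξ₀ ^ 2 / 4 - a * ξ ^ 2 / 4) := by
  set F : ℝ → ℝ := fun t => t ^ (d - 1) * W t ^ 2 * (deriv θ t + a / 2 * t) with hFdef
  have hFconst := const_of_deriv_zero_Ioi F hF
  -- F ≡ 0 on (0,∞)
  have hFzero : ∀ ξ > (0 : ℝ), F ξ = 0 := by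
    intro ξ hξ
    have heq : ∀ᶠ t in nhdsWithin (0 : ℝ) (Ioi 0), F t = F ξ := by
      filter_upwards [self_mem_nhdsWithin] with t ht
      exact hFconst t ht ξ hξ
    have h1 : Tendsto F (nhdsWithin (0 : ℝ) (Ioi 0)) (nhds (F ξ)) :=
      Tendsto.congr' (heq.mono fun t h => h.symm) tendsto_const_nhds
    exact tendsto_nhds_unique h1 hF0
  have hθ' : ∀ ξ > (0 : ℝ), deriv θ ξ = -(a / 2) * ξ := by
    intro ξ hξ
    have h0 := hFzero ξ hξ
    have hpos : 0 < ξ ^ (d - 1) * W ξ ^ 2 :=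
      mul_pos (Real.rpow_pos_of_pos hξ _) (pow_pos (hWpos ξ hξ) 2)
    have : deriv θ ξ + a / 2 * ξ = 0 := by
      by_contra hne
      exact hne (by
        have := mul_eq_zero.1 h0
        rcases this with h | h
        · exact absurd h hpos.ne'
        · exact h)
    linarith
  refine ⟨hθ', ?_⟩
  -- G t = θ t + a t²/4 is constant on (0,∞)
  have hG : ∀ ξ > (0 : ℝ), HasDerivAt (fun t => θ t + a * t ^ 2 / 4) 0 ξ := by
    intro ξ hξ
    have h1 : HasDerivAt θ (deriv θ ξ) ξ := (hθ ξ hξ).hasDerivAt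
    have h2 : HasDerivAt (fun t : ℝ => a * t ^ 2 / 4) (a * (2 * ξ) / 4) ξ := by
      have := ((hasDerivAt_pow 2 ξ).const_mul a).div_const 4
      simpa using this
    have := h1.add h2
    have hd' : deriv θ ξ + a * (2 * ξ) / 4 = 0 := by
      rw [hθ' ξ hξ]; ring
    rw [hd'] at this; exact this
  have hGconst := const_of_deriv_zero_Ioi _ hG
  intro ξ hξ ξ₀ hξ₀
  have := hGconst ξ hξ ξ₀ hξ₀
  linarith
end
end

section
/- (Lemma 4.2, identity (E:R1): zero Hamiltonian / Pohozaev identity for the critical ground state) Let (R, φ_R) be a radial ground state. Then ∫₀^∞ ( R'(ξ)² − V(R)(ξ)/(2σ+1) )·ξ^{d−1} dξ = 0. -/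
open MeasureTheory Set Filter
open scoped Topology

noncomputable section

/-- A radial ground state of the L²-critical generalized Hartree equation:
a positive radial solution `R` of `ΔR - R + ((-Δ)⁻¹ R^{2σ+1}) R^{2σ} = 0`,
written in radial coordinates, together with the potential `phi` encoding the
radial nonlocal term `(-Δ)⁻¹ R^{2σ+1}`, and assumed to decay exponentially. -/
structure RadialGroundState (d : ℕ) (σ : ℝ) where
  R : ℝ → ℝ
  phi : ℝ → ℝ
  smooth_R : ContDiffOn ℝ 2 R (Set.Ici 0)
  smooth_phi : ContDiffOn ℝ 2 phi (Set.Ici 0)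
  R_pos : ∀ ξ ≥ (0 : ℝ), 0 < R ξ
  R_deriv_zero : deriv R 0 = 0
  phi_eq : ∀ ξ > (0 : ℝ),
    deriv (deriv phi) ξ + ((d : ℝ) - 1) / ξ * deriv phi ξ = -(R ξ ^ (2 * σ + 1))
  phi_deriv_zero : deriv phi 0 = 0
  phi_lim : Filter.Tendsto phi Filter.atTop (nhds 0)
  R_eq : ∀ ξ > (0 : ℝ),
    deriv (deriv R) ξ + ((d : ℝ) - 1) / ξ * deriv R ξ - R ξ + phi ξ * R ξ ^ (2 * σ) = 0
  decay : ∃ C δ : ℝ, 0 < C ∧ 0 < δ ∧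
    ∀ ξ ≥ (0 : ℝ), |R ξ| + |deriv R ξ| ≤ C * Real.exp (-δ * ξ)



lemma tendsto_pow_mul_exp_neg_mul (k : ℕ) {c : ℝ} (hc : 0 < c) :
    Tendsto (fun ξ : ℝ => ξ ^ k * Real.exp (-(c * ξ))) atTop (𝓝 0) := by
  have h1 : Tendsto (fun ξ : ℝ => c * ξ) atTop atTop :=
    Tendsto.const_mul_atTop hc tendsto_id
  have h2 := (Real.tendsto_pow_mul_exp_neg_atTop_nhds_zero k).comp h1
  have h3 := h2.const_mul ((c ^ k)⁻¹)
  rw [mul_zero] at h3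
  refine h3.congr fun ξ => ?_
  simp only [Function.comp_apply, mul_pow]
  have : (c:ℝ)^k ≠ 0 := by positivity
  field_simp

lemma exists_bound_pow_mul_exp (k : ℕ) {c : ℝ} (hc : 0 < c) :
    ∃ B : ℝ, 0 < B ∧ ∀ s : ℝ, 0 ≤ s → s ^ k * Real.exp (-(c * s)) ≤ B := by
  obtain ⟨X, hX⟩ := ((tendsto_pow_mul_exp_neg_mul k hc).eventually
    (eventually_le_nhds (show (0:ℝ) < 1 by norm_num))).exists_forall_of_atTop
  have hcont2 : ContinuousOn (fun s : ℝ => s ^ k * Real.exp (-(c * s))) (Icc 0 X) := by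
    fun_prop
  obtain ⟨B0, hB0⟩ := (isCompact_Icc (a := (0:ℝ)) (b := X)).exists_bound_of_continuousOn hcont2
  refine ⟨max 1 B0 + 1, by positivity, fun s hs => ?_⟩
  rcases le_total s X with h | h
  · calc s ^ k * Real.exp (-(c * s)) ≤ ‖s ^ k * Real.exp (-(c * s))‖ := le_abs_self _
      _ ≤ B0 := hB0 s ⟨hs, h⟩
      _ ≤ max 1 B0 + 1 := by linarith [le_max_right (1:ℝ) B0]
  · calc s ^ k * Real.exp (-(c * s)) ≤ 1 := hX s h
      _ ≤ max 1 B0 + 1 := by linarith [le_max_left (1:ℝ) B0]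

lemma hasDerivAt2 {f : ℝ → ℝ} (hf : ContDiffOn ℝ 2 f (Set.Ici 0)) {ξ : ℝ} (hξ : 0 < ξ) :
    HasDerivAt f (deriv f ξ) ξ ∧ HasDerivAt (deriv f) (deriv (deriv f) ξ) ξ := by
  have hopen : ContDiffOn ℝ 2 f (Set.Ioi 0) := hf.mono Set.Ioi_subset_Ici_self
  have h1 : DifferentiableOn ℝ f (Set.Ioi 0) := hopen.differentiableOn (by norm_num)
  have h2 : ContDiffOn ℝ 1 (deriv f) (Set.Ioi 0) :=
    hopen.deriv_of_isOpen isOpen_Ioi (by norm_num)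
  have h3 : DifferentiableOn ℝ (deriv f) (Set.Ioi 0) := h2.differentiableOn (by norm_num)
  exact ⟨((h1 ξ hξ).differentiableAt (isOpen_Ioi.mem_nhds hξ)).hasDerivAt,
    ((h3 ξ hξ).differentiableAt (isOpen_Ioi.mem_nhds hξ)).hasDerivAt⟩

/-- The combined Pohozaev antiderivative. -/
def Wfun (n : ℕ) (σ : ℝ) (G : RadialGroundState (n+2) σ) : ℝ → ℝ := fun ξ =>
  ((n:ℝ)+2)/2 * (ξ^(n+1) * G.R ξ * deriv G.R ξ)
  + ξ^(n+2) * ((deriv G.R ξ)^2 - (G.R ξ)^2)/2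
  + ξ^(n+2) * G.phi ξ * G.R ξ ^ (2*σ+1) / (2*σ+1)
  + ξ^(n+2) * (deriv G.phi ξ)^2 / (2*(2*σ+1))
  - ((1-((n:ℝ)+2)/2)/(2*σ+1)) * (ξ^(n+1) * G.phi ξ * deriv G.phi ξ)

lemma hasDerivAt_W {n : ℕ} {σ : ℝ} (hσ : σ = 2/((n:ℝ)+2))
    (G : RadialGroundState (n+2) σ) {ξ : ℝ} (hξ : 0 < ξ) :
    HasDerivAt (Wfun n σ G)
      (((deriv G.R ξ)^2 - G.phi ξ * G.R ξ ^ (2*σ+1)/(2*σ+1)) * ξ^(n+1)) ξ := by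
  have hn2 : ((n:ℝ)+2) ≠ 0 := by positivity
  have hσ0 : 0 < σ := by rw [hσ]; positivity
  have hr0 : 0 < G.R ξ := G.R_pos ξ hξ.le
  have hRd := hasDerivAt2 G.smooth_R hξ
  have hφd := hasDerivAt2 G.smooth_phi hξ
  have hpow1 : HasDerivAt (fun ξ : ℝ => ξ^(n+1)) (((n:ℝ)+1)*ξ^n) ξ := by
    simpa using hasDerivAt_pow (n+1) ξ
  have hpow2 : HasDerivAt (fun ξ : ℝ => ξ^(n+2)) (((n:ℝ)+2)*ξ^(n+1)) ξ := by
    simpa using hasDerivAt_pow (n+2) ξ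
  have hrp : HasDerivAt (fun ξ => G.R ξ ^ (2*σ+1))
      (deriv G.R ξ * (2*σ+1) * G.R ξ ^ (2*σ)) ξ := by
    have := hRd.1.rpow_const (p := 2*σ+1) (Or.inl hr0.ne')
    rwa [show 2*σ+1-1 = 2*σ by ring] at this
  have h1 := (((hpow1.mul hRd.1).mul hRd.2)).const_mul (((n:ℝ)+2)/2)
  have h2 := (hpow2.mul ((hRd.2.pow 2).sub (hRd.1.pow 2))).div_const 2
  have h3 := ((hpow2.mul hφd.1).mul hrp).div_const (2*σ+1)
  have h4 := (hpow2.mul (hφd.2.pow 2)).div_const (2*(2*σ+1))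
  have h5 := (((hpow1.mul hφd.1).mul hφd.2)).const_mul ((1-((n:ℝ)+2)/2)/(2*σ+1))
  have total := (((h1.add h2).add h3).add h4).sub h5
  refine (show HasDerivAt (Wfun n σ G) _ ξ from total).congr_deriv ?_
  -- now a pure real-number identity
  have hb : deriv (deriv G.R) ξ
      = G.R ξ - G.phi ξ * G.R ξ ^ (2*σ) - (((n:ℝ)+1)/ξ) * deriv G.R ξ := by
    have := G.R_eq ξ hξ
    push_cast at this
    rw [show ((n:ℝ)+2-1) = (n:ℝ)+1 by ring] at this
    linarith [this]
  have hg : deriv (deriv G.phi) ξ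
      = -(G.R ξ ^ (2*σ+1)) - (((n:ℝ)+1)/ξ) * deriv G.phi ξ := by
    have := G.phi_eq ξ hξ
    push_cast at this
    rw [show ((n:ℝ)+2-1) = (n:ℝ)+1 by ring] at this
    linarith [this]
  have hu : G.R ξ ^ (2*σ+1) = G.R ξ ^ (2*σ) * G.R ξ := Real.rpow_add_one hr0.ne' _
  have hp : 2*σ+1 = ((n:ℝ)+6)/((n:ℝ)+2) := by rw [hσ]; field_simp; ring
  rw [hu] at hg ⊢
  rw [hb, hg, hp]
  have hn6 : ((n:ℝ)+6) ≠ 0 := by positivity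
  simp only [Pi.mul_apply, Pi.sub_apply, Pi.pow_apply]
  field_simp
  ring

section
variable {n : ℕ} {σ : ℝ} (G : RadialGroundState (n+2) σ)

lemma phi_bound : ∃ M : ℝ, 0 < M ∧ ∀ ξ ≥ (0:ℝ), |G.phi ξ| ≤ M := by
  obtain ⟨X, hX⟩ := Metric.tendsto_atTop.mp G.phi_lim 1 one_pos
  have hc : ContinuousOn G.phi (Icc 0 (max X 0)) :=
    G.smooth_phi.continuousOn.mono (fun x hx => hx.1)
  obtain ⟨B, hB⟩ := isCompact_Icc.exists_bound_of_continuousOn hc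
  refine ⟨max 1 B + 1, by positivity, fun ξ hξ => ?_⟩
  rcases le_total ξ (max X 0) with h | h
  · have := hB ξ ⟨hξ, h⟩
    rw [Real.norm_eq_abs] at this
    linarith [le_max_right (1:ℝ) B]
  · have := hX ξ (le_trans (le_max_left X 0) h)
    rw [Real.dist_eq, sub_zero] at this
    linarith [le_max_left (1:ℝ) B]

lemma psi_bound (hσ0 : 0 < σ) {C δ : ℝ} (hC : 0 < C) (hδ : 0 < δ)
    (hdec : ∀ ξ ≥ (0:ℝ), |G.R ξ| + |deriv G.R ξ| ≤ C * Real.exp (-δ * ξ)) :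
    ∃ M : ℝ, 0 < M ∧ ∀ ξ ≥ (1:ℝ), |ξ^(n+1) * deriv G.phi ξ| ≤ M := by
  have hRb : ∀ s ≥ (0:ℝ), G.R s ≤ C * Real.exp (-δ*s) := by
    intro s hs
    have := hdec s hs
    have h2 := abs_nonneg (deriv G.R s)
    have h3 := le_abs_self (G.R s)
    linarith
  have hR'b : ∀ s ≥ (0:ℝ), |deriv G.R s| ≤ C * Real.exp (-δ*s) := by
    intro s hs
    have := hdec s hs
    have h2 := abs_nonneg (G.R s)
    linarith
  have hRpb : ∀ s ≥ (0:ℝ), G.R s ^ (2*σ+1) ≤ C^(2*σ+1) * Real.exp (-δ*s) := by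
    intro s hs
    have h0 : (0:ℝ) ≤ G.R s := (G.R_pos s hs).le
    have h1 : G.R s ^ (2*σ+1) ≤ (C * Real.exp (-δ*s)) ^ (2*σ+1) :=
      Real.rpow_le_rpow h0 (hRb s hs) (by linarith)
    have h2 : (C * Real.exp (-δ*s)) ^ (2*σ+1) = C^(2*σ+1) * Real.exp (-δ*s*(2*σ+1)) := by
      rw [Real.mul_rpow hC.le (Real.exp_nonneg _), ← Real.exp_mul]
    have h3 : Real.exp (-δ*s*(2*σ+1)) ≤ Real.exp (-δ*s) := by
      apply Real.exp_le_exp.mpr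
      nlinarith [mul_nonneg hδ.le hs]
    have h4 : (0:ℝ) ≤ C^(2*σ+1) := Real.rpow_nonneg hC.le _
    calc G.R s ^ (2*σ+1) ≤ C^(2*σ+1) * Real.exp (-δ*s*(2*σ+1)) := by rw [← h2]; exact h1
      _ ≤ C^(2*σ+1) * Real.exp (-δ*s) := mul_le_mul_of_nonneg_left h3 h4
  obtain ⟨B, hB0, hB⟩ := exists_bound_pow_mul_exp (n+1) (half_pos hδ)
  set K : ℝ := C^(2*σ+1) * B with hK
  have hK0 : 0 < K := mul_pos (Real.rpow_pos_of_pos hC _) hB0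
  have hΨb : ∀ s ≥ (0:ℝ), s^(n+1) * G.R s^(2*σ+1) ≤ K * Real.exp (-(δ/2)*s) := by
    intro s hs
    have h1 := hB s hs
    have h2 := hRpb s hs
    have hsp : (0:ℝ) ≤ s^(n+1) := by positivity
    have e1 : Real.exp (-δ*s) = Real.exp (-(δ/2 * s)) * Real.exp (-(δ/2)*s) := by
      rw [← Real.exp_add]; ring_nf
    have h4 : (0:ℝ) ≤ C^(2*σ+1) := Real.rpow_nonneg hC.le _
    calc s^(n+1) * G.R s^(2*σ+1) ≤ s^(n+1) * (C^(2*σ+1) * Real.exp (-δ*s)) :=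
          mul_le_mul_of_nonneg_left h2 hsp
      _ = C^(2*σ+1) * (s^(n+1) * Real.exp (-(δ/2 * s))) * Real.exp (-(δ/2)*s) := by
          rw [e1]; ring
      _ ≤ C^(2*σ+1) * B * Real.exp (-(δ/2)*s) := by
          have := Real.exp_nonneg (-(δ/2)*s)
          nlinarith [mul_le_mul_of_nonneg_left h1 h4]
  -- integral bound
  have hgint : IntegrableOn (fun s : ℝ => K * Real.exp (-(δ/2)*s)) (Ioi 0) :=
    (exp_neg_integrableOn_Ioi 0 (half_pos hδ)).const_mul K
  set J : ℝ := ∫ s in Ioi (0:ℝ), K * Real.exp (-(δ/2)*s) with hJ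
  have hJ0 : 0 ≤ J := by
    apply integral_nonneg
    intro s
    positivity
  set Ψ : ℝ → ℝ := fun s => s^(n+1) * deriv G.phi s with hΨ
  refine ⟨|Ψ 1| + J + 1, by positivity, fun ξ hξ => ?_⟩
  have h1ξ : (1:ℝ) ≤ ξ := hξ
  have hder : ∀ s ∈ uIcc (1:ℝ) ξ, HasDerivAt Ψ (-(s^(n+1) * G.R s^(2*σ+1))) s := by
    intro s hs
    rw [uIcc_of_le h1ξ] at hs
    have hs0 : (0:ℝ) < s := lt_of_lt_of_le one_pos hs.1
    have hφd := hasDerivAt2 G.smooth_phi hs0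
    have hpow1 : HasDerivAt (fun t : ℝ => t^(n+1)) (((n:ℝ)+1)*s^n) s := by
      simpa using hasDerivAt_pow (n+1) s
    have h := hpow1.mul hφd.2
    refine (show HasDerivAt Ψ _ s from h).congr_deriv ?_
    have hg := G.phi_eq s hs0
    push_cast at hg
    rw [show ((n:ℝ)+2-1) = (n:ℝ)+1 by ring] at hg
    have hg' : deriv (deriv G.phi) s
        = -(G.R s ^ (2*σ+1)) - (((n:ℝ)+1)/s) * deriv G.phi s := by linarith
    rw [hg']
    field_simp
    ring
  have hsub : uIcc (1:ℝ) ξ ⊆ Ici (0:ℝ) := by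
    rw [uIcc_of_le h1ξ]
    exact fun x hx => le_trans zero_le_one hx.1
  have hcont' : ContinuousOn (fun s : ℝ => -(s^(n+1) * G.R s^(2*σ+1))) (uIcc 1 ξ) := by
    apply ContinuousOn.neg
    apply ContinuousOn.mul (by fun_prop)
    apply ContinuousOn.rpow_const (G.smooth_R.continuousOn.mono hsub)
    intro x hx
    exact Or.inl (G.R_pos x (hsub hx)).ne'
  have hii : IntervalIntegrable _ volume 1 ξ := hcont'.intervalIntegrable
  have hftc := intervalIntegral.integral_eq_sub_of_hasDerivAt hder hii
  have habs : |∫ s in (1:ℝ)..ξ, -(s^(n+1) * G.R s^(2*σ+1))|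
      ≤ ∫ s in (1:ℝ)..ξ, K * Real.exp (-(δ/2)*s) := by
    refine le_trans (intervalIntegral.abs_integral_le_integral_abs h1ξ) ?_
    apply intervalIntegral.integral_mono_on h1ξ hii.abs
      ((by fun_prop : Continuous fun s : ℝ => K * Real.exp (-(δ/2)*s)).intervalIntegrable 1 ξ)
    intro s hs
    have hs0 : (0:ℝ) ≤ s := le_trans zero_le_one hs.1
    have hRp0 : (0:ℝ) ≤ s^(n+1) * G.R s^(2*σ+1) := by
      have := (G.R_pos s hs0).le
      positivity
    rw [abs_neg, abs_of_nonneg hRp0]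
    exact hΨb s hs0
  have hintJ : ∫ s in (1:ℝ)..ξ, K * Real.exp (-(δ/2)*s) ≤ J := by
    rw [intervalIntegral.integral_of_le h1ξ]
    apply setIntegral_mono_set hgint
    · filter_upwards with s using by positivity
    · exact HasSubset.Subset.eventuallyLE (fun x hx => lt_of_lt_of_le one_pos hx.1.le)
  have hΨξ : Ψ ξ = Ψ 1 + ∫ s in (1:ℝ)..ξ, -(s^(n+1) * G.R s^(2*σ+1)) := by
    rw [hftc]; ring
  calc |Ψ ξ| ≤ |Ψ 1| + |∫ s in (1:ℝ)..ξ, -(s^(n+1) * G.R s^(2*σ+1))| := by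
        rw [hΨξ]; exact abs_add_le _ _
    _ ≤ |Ψ 1| + J := by linarith
    _ ≤ |Ψ 1| + J + 1 := by linarith

end

lemma Wfun_zero {n : ℕ} {σ : ℝ} (G : RadialGroundState (n+2) σ) : Wfun n σ G 0 = 0 := by
  simp [Wfun]

lemma Wfun_cont0 {n : ℕ} {σ : ℝ} (G : RadialGroundState (n+2) σ) :
    ContinuousWithinAt (Wfun n σ G) (Set.Ici 0) 0 := by
  rw [← continuousWithinAt_Ioi_iff_Ici]
  have hR0 : Tendsto G.R (𝓝[>] (0:ℝ)) (𝓝 (G.R 0)) :=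
    (G.smooth_R.continuousOn 0 Set.self_mem_Ici).mono Set.Ioi_subset_Ici_self
  have hφ0 : Tendsto G.phi (𝓝[>] (0:ℝ)) (𝓝 (G.phi 0)) :=
    (G.smooth_phi.continuousOn 0 Set.self_mem_Ici).mono Set.Ioi_subset_Ici_self
  have hdR : Tendsto (deriv G.R) (𝓝[>] (0:ℝ)) (𝓝 (derivWithin G.R (Set.Ici 0) 0)) := by
    have hc := (G.smooth_R.continuousOn_derivWithin (uniqueDiffOn_Ici 0) (by norm_num))
      0 Set.self_mem_Ici
    have h2 : Tendsto (derivWithin G.R (Set.Ici 0)) (𝓝[>] (0:ℝ))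
        (𝓝 (derivWithin G.R (Set.Ici 0) 0)) := hc.mono Set.Ioi_subset_Ici_self
    apply h2.congr'
    filter_upwards [self_mem_nhdsWithin] with s hs
    exact derivWithin_of_mem_nhds (Ici_mem_nhds hs)
  have hdφ : Tendsto (deriv G.phi) (𝓝[>] (0:ℝ)) (𝓝 (derivWithin G.phi (Set.Ici 0) 0)) := by
    have hc := (G.smooth_phi.continuousOn_derivWithin (uniqueDiffOn_Ici 0) (by norm_num))
      0 Set.self_mem_Ici
    have h2 : Tendsto (derivWithin G.phi (Set.Ici 0)) (𝓝[>] (0:ℝ))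
        (𝓝 (derivWithin G.phi (Set.Ici 0) 0)) := hc.mono Set.Ioi_subset_Ici_self
    apply h2.congr'
    filter_upwards [self_mem_nhdsWithin] with s hs
    exact derivWithin_of_mem_nhds (Ici_mem_nhds hs)
  have hpow1 : Tendsto (fun ξ:ℝ => ξ^(n+1)) (𝓝[>] (0:ℝ)) (𝓝 0) := by
    have h := (continuous_pow (n+1)).tendsto (0:ℝ)
    rw [zero_pow (by omega : n+1 ≠ 0)] at h
    exact h.mono_left nhdsWithin_le_nhds
  have hpow2 : Tendsto (fun ξ:ℝ => ξ^(n+2)) (𝓝[>] (0:ℝ)) (𝓝 0) := by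
    have h := (continuous_pow (n+2)).tendsto (0:ℝ)
    rw [zero_pow (by omega : n+2 ≠ 0)] at h
    exact h.mono_left nhdsWithin_le_nhds
  have hrp : Tendsto (fun ξ => G.R ξ ^ (2*σ+1)) (𝓝[>] (0:ℝ)) (𝓝 (G.R 0 ^ (2*σ+1))) :=
    hR0.rpow_const (Or.inl (G.R_pos 0 le_rfl).ne')
  have m1 := ((hpow1.mul hR0).mul hdR).const_mul (((n:ℝ)+2)/2)
  have m2 := (hpow2.mul ((hdR.pow 2).sub (hR0.pow 2))).div_const 2
  have m3 := ((hpow2.mul hφ0).mul hrp).div_const (2*σ+1)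
  have m4 := (hpow2.mul (hdφ.pow 2)).div_const (2*(2*σ+1))
  have m5 := ((hpow1.mul hφ0).mul hdφ).const_mul ((1-((n:ℝ)+2)/2)/(2*σ+1))
  have main := (((m1.add m2).add m3).add m4).sub m5
  have main' : Tendsto (fun x : ℝ =>
      ((n:ℝ)+2)/2 * (x ^ (n+1) * G.R x * deriv G.R x)
      + x ^ (n+2) * (deriv G.R x ^ 2 - G.R x ^ 2) / 2
      + x ^ (n+2) * G.phi x * G.R x ^ (2*σ+1) / (2*σ+1)
      + x ^ (n+2) * deriv G.phi x ^ 2 / (2*(2*σ+1))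
      - (1-((n:ℝ)+2)/2)/(2*σ+1) * (x ^ (n+1) * G.phi x * deriv G.phi x))
      (𝓝[>] (0:ℝ)) (𝓝 0) := by
    convert main using 2
    norm_num
  unfold ContinuousWithinAt
  rw [Wfun_zero]
  exact main'

lemma Wfun_top {n : ℕ} {σ : ℝ} (G : RadialGroundState (n+2) σ) (hn : 1 ≤ n) (hσ0 : 0 < σ)
    {C δ : ℝ} (hC : 0 < C) (hδ : 0 < δ)
    (hdec : ∀ ξ ≥ (0:ℝ), |G.R ξ| + |deriv G.R ξ| ≤ C * Real.exp (-δ * ξ)) :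
    Tendsto (Wfun n σ G) atTop (𝓝 0) := by
  obtain ⟨Mφ, hMφ0, hMφ⟩ := phi_bound G
  obtain ⟨M, hM0, hM⟩ := psi_bound G hσ0 hC hδ hdec
  have hdec' : ∀ ξ ≥ (0:ℝ), |G.R ξ| + |deriv G.R ξ| ≤ C * Real.exp (-(δ * ξ)) := by
    intro ξ hξ; rw [← neg_mul]; exact hdec ξ hξ
  have hRb : ∀ s ≥ (0:ℝ), |G.R s| ≤ C * Real.exp (-(δ*s)) := by
    intro s hs; have := hdec' s hs; have h2 := abs_nonneg (deriv G.R s); linarith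
  have hR'b : ∀ s ≥ (0:ℝ), |deriv G.R s| ≤ C * Real.exp (-(δ*s)) := by
    intro s hs; have := hdec' s hs; have h2 := abs_nonneg (G.R s); linarith
  have hRpb : ∀ s ≥ (0:ℝ), G.R s ^ (2*σ+1) ≤ C^(2*σ+1) * Real.exp (-(δ*s)) := by
    intro s hs
    have h0 : (0:ℝ) ≤ G.R s := (G.R_pos s hs).le
    have h1 : G.R s ^ (2*σ+1) ≤ (C * Real.exp (-(δ*s))) ^ (2*σ+1) :=
      Real.rpow_le_rpow h0 ((le_abs_self _).trans (hRb s hs)) (by linarith)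
    have h2 : (C * Real.exp (-(δ*s))) ^ (2*σ+1) = C^(2*σ+1) * Real.exp (-(δ*s)*(2*σ+1)) := by
      rw [Real.mul_rpow hC.le (Real.exp_nonneg _), ← Real.exp_mul]
    have h3 : Real.exp (-(δ*s)*(2*σ+1)) ≤ Real.exp (-(δ*s)) := by
      apply Real.exp_le_exp.mpr
      nlinarith [mul_nonneg hδ.le hs]
    have h4 : (0:ℝ) ≤ C^(2*σ+1) := Real.rpow_nonneg hC.le _
    calc G.R s ^ (2*σ+1) ≤ C^(2*σ+1) * Real.exp (-(δ*s)*(2*σ+1)) := by rw [← h2]; exact h1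
      _ ≤ C^(2*σ+1) * Real.exp (-(δ*s)) := mul_le_mul_of_nonneg_left h3 h4
  have hexp1 : ∀ ξ ≥ (0:ℝ), Real.exp (-(δ*ξ)) ≤ 1 := by
    intro ξ hξ
    have h := Real.exp_le_exp.mpr (show -(δ*ξ) ≤ 0 by nlinarith)
    rwa [Real.exp_zero] at h
  have hp1 : (1:ℝ) ≤ 2*σ+1 := by linarith
  -- term 1
  have w1 : Tendsto (fun ξ:ℝ => ((n:ℝ)+2)/2 * (ξ^(n+1) * G.R ξ * deriv G.R ξ)) atTop (𝓝 0) := by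
    have hg : Tendsto (fun ξ:ℝ => (((n:ℝ)+2)/2 * C^2) * (ξ^(n+1) * Real.exp (-(δ*ξ))))
        atTop (𝓝 0) := by
      simpa using (tendsto_pow_mul_exp_neg_mul (n+1) hδ).const_mul (((n:ℝ)+2)/2 * C^2)
    apply squeeze_zero_norm' _ hg
    filter_upwards [eventually_ge_atTop (0:ℝ)] with ξ hξ
    have h1 := hRb ξ hξ
    have h2 := hR'b ξ hξ
    have he := hexp1 ξ hξ
    have he0 := Real.exp_nonneg (-(δ*ξ))
    have hRR' : |G.R ξ| * |deriv G.R ξ| ≤ C^2 * Real.exp (-(δ*ξ)) := by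
      calc |G.R ξ| * |deriv G.R ξ|
          ≤ (C * Real.exp (-(δ*ξ))) * (C * Real.exp (-(δ*ξ))) :=
            mul_le_mul h1 h2 (abs_nonneg _) (by positivity)
        _ = C^2 * (Real.exp (-(δ*ξ)) * Real.exp (-(δ*ξ))) := by ring
        _ ≤ C^2 * Real.exp (-(δ*ξ)) := by
            apply mul_le_mul_of_nonneg_left _ (sq_nonneg C)
            nlinarith [mul_nonneg he0 (sub_nonneg.mpr he)]
    calc ‖((n:ℝ)+2)/2 * (ξ^(n+1) * G.R ξ * deriv G.R ξ)‖
        = ((n:ℝ)+2)/2 * (ξ^(n+1) * (|G.R ξ| * |deriv G.R ξ|)) := by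
          rw [Real.norm_eq_abs, abs_mul, abs_mul, abs_mul, abs_pow, abs_of_nonneg hξ,
            abs_of_nonneg (by positivity : (0:ℝ) ≤ ((n:ℝ)+2)/2)]
          ring
      _ ≤ ((n:ℝ)+2)/2 * (ξ^(n+1) * (C^2 * Real.exp (-(δ*ξ)))) := by
          apply mul_le_mul_of_nonneg_left _ (by positivity)
          exact mul_le_mul_of_nonneg_left hRR' (by positivity)
      _ = (((n:ℝ)+2)/2 * C^2) * (ξ^(n+1) * Real.exp (-(δ*ξ))) := by ring
  -- term 2
  have w2 : Tendsto (fun ξ:ℝ => ξ^(n+2) * ((deriv G.R ξ)^2 - (G.R ξ)^2)/2) atTop (𝓝 0) := by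
    have hg : Tendsto (fun ξ:ℝ => C^2 * (ξ^(n+2) * Real.exp (-(δ*ξ)))) atTop (𝓝 0) := by
      simpa using (tendsto_pow_mul_exp_neg_mul (n+2) hδ).const_mul (C^2)
    apply squeeze_zero_norm' _ hg
    filter_upwards [eventually_ge_atTop (0:ℝ)] with ξ hξ
    have h1 := hRb ξ hξ
    have h2 := hR'b ξ hξ
    have he := hexp1 ξ hξ
    have he0 := Real.exp_nonneg (-(δ*ξ))
    have hsq : |(deriv G.R ξ)^2 - (G.R ξ)^2| ≤ 2 * (C^2 * Real.exp (-(δ*ξ))) := by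
      rw [abs_sub_le_iff]
      constructor <;> nlinarith [sq_abs (G.R ξ), sq_abs (deriv G.R ξ), sq_nonneg (G.R ξ),
        sq_nonneg (deriv G.R ξ), abs_nonneg (G.R ξ), abs_nonneg (deriv G.R ξ)]
    calc ‖ξ^(n+2) * ((deriv G.R ξ)^2 - (G.R ξ)^2)/2‖
        = ξ^(n+2) * |(deriv G.R ξ)^2 - (G.R ξ)^2| / 2 := by
          rw [Real.norm_eq_abs, abs_div, abs_mul, abs_pow, abs_of_nonneg hξ]
          norm_num
      _ ≤ ξ^(n+2) * (2 * (C^2 * Real.exp (-(δ*ξ)))) / 2 := by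
          have := mul_le_mul_of_nonneg_left hsq (show (0:ℝ) ≤ ξ^(n+2) by positivity)
          linarith
      _ = C^2 * (ξ^(n+2) * Real.exp (-(δ*ξ))) := by ring
  -- term 3
  have w3 : Tendsto (fun ξ:ℝ => ξ^(n+2) * G.phi ξ * G.R ξ ^ (2*σ+1) / (2*σ+1)) atTop (𝓝 0) := by
    have hg : Tendsto (fun ξ:ℝ => (Mφ * C^(2*σ+1)) * (ξ^(n+2) * Real.exp (-(δ*ξ))))
        atTop (𝓝 0) := by
      simpa using (tendsto_pow_mul_exp_neg_mul (n+2) hδ).const_mul (Mφ * C^(2*σ+1))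
    apply squeeze_zero_norm' _ hg
    filter_upwards [eventually_ge_atTop (0:ℝ)] with ξ hξ
    have h1 := hMφ ξ hξ
    have h2 := hRpb ξ hξ
    have hR0 : (0:ℝ) ≤ G.R ξ ^ (2*σ+1) := Real.rpow_nonneg (G.R_pos ξ hξ).le _
    have habs : |ξ^(n+2) * G.phi ξ * G.R ξ ^ (2*σ+1) / (2*σ+1)|
        ≤ ξ^(n+2) * |G.phi ξ| * G.R ξ ^ (2*σ+1) := by
      rw [abs_div, abs_mul, abs_mul, abs_pow, abs_of_nonneg hξ, abs_of_nonneg hR0,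
        abs_of_nonneg (by linarith : (0:ℝ) ≤ 2*σ+1)]
      apply div_le_self (by positivity) hp1
    refine le_trans habs ?_
    calc ξ^(n+2) * |G.phi ξ| * G.R ξ ^ (2*σ+1)
        ≤ ξ^(n+2) * Mφ * (C^(2*σ+1) * Real.exp (-(δ*ξ))) := by
          apply mul_le_mul _ h2 hR0 (by positivity)
          exact mul_le_mul_of_nonneg_left h1 (by positivity)
      _ = (Mφ * C^(2*σ+1)) * (ξ^(n+2) * Real.exp (-(δ*ξ))) := by ring
  -- term 4
  have w4 : Tendsto (fun ξ:ℝ => ξ^(n+2) * (deriv G.phi ξ)^2 / (2*(2*σ+1))) atTop (𝓝 0) := by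
    have hg : Tendsto (fun ξ:ℝ => M^2 * ξ⁻¹) atTop (𝓝 0) := by
      simpa using tendsto_inv_atTop_zero.const_mul (M^2)
    apply squeeze_zero_norm' _ hg
    filter_upwards [eventually_ge_atTop (1:ℝ)] with ξ hξ1
    have hξ0 : (0:ℝ) < ξ := lt_of_lt_of_le one_pos hξ1
    have h1 : (ξ^(n+1) * deriv G.phi ξ)^2 ≤ M^2 := by
      have := hM ξ hξ1
      nlinarith [sq_abs (ξ^(n+1) * deriv G.phi ξ), abs_nonneg (ξ^(n+1) * deriv G.phi ξ)]
    have h2 : ξ ≤ ξ^n := le_self_pow₀ hξ1 (by omega)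
    have e2 : ξ^(n+2) * (deriv G.phi ξ)^2 = (ξ^(n+1) * deriv G.phi ξ)^2 / ξ^n := by
      rw [eq_div_iff (by positivity : (ξ:ℝ)^n ≠ 0)]
      ring
    have h3 : ξ^(n+2) * (deriv G.phi ξ)^2 ≤ M^2 / ξ := by
      rw [e2]
      calc (ξ^(n+1) * deriv G.phi ξ)^2 / ξ^n ≤ M^2 / ξ^n :=
            (div_le_div_iff_of_pos_right (by positivity)).mpr h1
        _ ≤ M^2 / ξ := div_le_div_of_nonneg_left (by positivity) hξ0 h2
    calc ‖ξ^(n+2) * (deriv G.phi ξ)^2 / (2*(2*σ+1))‖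
        = ξ^(n+2) * (deriv G.phi ξ)^2 / (2*(2*σ+1)) := by
          rw [Real.norm_eq_abs, abs_of_nonneg (by positivity)]
      _ ≤ ξ^(n+2) * (deriv G.phi ξ)^2 := div_le_self (by positivity) (by linarith)
      _ ≤ M^2 / ξ := h3
      _ = M^2 * ξ⁻¹ := by rw [div_eq_mul_inv]
  -- term 5
  have w5 : Tendsto (fun ξ:ℝ =>
      (1-((n:ℝ)+2)/2)/(2*σ+1) * (ξ^(n+1) * G.phi ξ * deriv G.phi ξ)) atTop (𝓝 0) := by
    have hφabs : Tendsto (fun ξ => |G.phi ξ|) atTop (𝓝 0) := by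
      simpa using G.phi_lim.abs
    have hg : Tendsto (fun ξ:ℝ => (|(1-((n:ℝ)+2)/2)/(2*σ+1)| * M) * |G.phi ξ|)
        atTop (𝓝 0) := by
      simpa using hφabs.const_mul (|(1-((n:ℝ)+2)/2)/(2*σ+1)| * M)
    apply squeeze_zero_norm' _ hg
    filter_upwards [eventually_ge_atTop (1:ℝ)] with ξ hξ1
    have hψ := hM ξ hξ1
    calc ‖(1-((n:ℝ)+2)/2)/(2*σ+1) * (ξ^(n+1) * G.phi ξ * deriv G.phi ξ)‖
        = |(1-((n:ℝ)+2)/2)/(2*σ+1)| * (|ξ^(n+1) * deriv G.phi ξ| * |G.phi ξ|) := by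
          rw [Real.norm_eq_abs, abs_mul, abs_mul, abs_mul, abs_mul]
          ring
      _ ≤ |(1-((n:ℝ)+2)/2)/(2*σ+1)| * (M * |G.phi ξ|) := by
          apply mul_le_mul_of_nonneg_left _ (abs_nonneg _)
          exact mul_le_mul_of_nonneg_right hψ (abs_nonneg _)
      _ = (|(1-((n:ℝ)+2)/2)/(2*σ+1)| * M) * |G.phi ξ| := by ring
  have main := (((w1.add w2).add w3).add w4).sub w5
  rw [show (0:ℝ)+0+0+0-0 = 0 by norm_num] at main
  exact main

lemma T_integrable {n : ℕ} {σ : ℝ} (G : RadialGroundState (n+2) σ) (hσ0 : 0 < σ)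
    {C δ : ℝ} (hC : 0 < C) (hδ : 0 < δ)
    (hdec : ∀ ξ ≥ (0:ℝ), |G.R ξ| + |deriv G.R ξ| ≤ C * Real.exp (-δ * ξ)) :
    IntegrableOn (fun ξ : ℝ =>
      ((deriv G.R ξ)^2 - G.phi ξ * G.R ξ ^ (2*σ+1)/(2*σ+1)) * ξ^(n+1)) (Set.Ioi 0) := by
  obtain ⟨Mφ, hMφ0, hMφ⟩ := phi_bound G
  obtain ⟨B, hB0, hB⟩ := exists_bound_pow_mul_exp (n+1) (half_pos hδ)
  have hdec' : ∀ ξ ≥ (0:ℝ), |G.R ξ| + |deriv G.R ξ| ≤ C * Real.exp (-(δ * ξ)) := by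
    intro ξ hξ; rw [← neg_mul]; exact hdec ξ hξ
  have hRb : ∀ s ≥ (0:ℝ), |G.R s| ≤ C * Real.exp (-(δ*s)) := by
    intro s hs; have := hdec' s hs; have h2 := abs_nonneg (deriv G.R s); linarith
  have hR'b : ∀ s ≥ (0:ℝ), |deriv G.R s| ≤ C * Real.exp (-(δ*s)) := by
    intro s hs; have := hdec' s hs; have h2 := abs_nonneg (G.R s); linarith
  have hRpb : ∀ s ≥ (0:ℝ), G.R s ^ (2*σ+1) ≤ C^(2*σ+1) * Real.exp (-(δ*s)) := by
    intro s hs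
    have h0 : (0:ℝ) ≤ G.R s := (G.R_pos s hs).le
    have h1 : G.R s ^ (2*σ+1) ≤ (C * Real.exp (-(δ*s))) ^ (2*σ+1) :=
      Real.rpow_le_rpow h0 ((le_abs_self _).trans (hRb s hs)) (by linarith)
    have h2 : (C * Real.exp (-(δ*s))) ^ (2*σ+1) = C^(2*σ+1) * Real.exp (-(δ*s)*(2*σ+1)) := by
      rw [Real.mul_rpow hC.le (Real.exp_nonneg _), ← Real.exp_mul]
    have h3 : Real.exp (-(δ*s)*(2*σ+1)) ≤ Real.exp (-(δ*s)) := by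
      apply Real.exp_le_exp.mpr
      nlinarith [mul_nonneg hδ.le hs]
    have h4 : (0:ℝ) ≤ C^(2*σ+1) := Real.rpow_nonneg hC.le _
    calc G.R s ^ (2*σ+1) ≤ C^(2*σ+1) * Real.exp (-(δ*s)*(2*σ+1)) := by rw [← h2]; exact h1
      _ ≤ C^(2*σ+1) * Real.exp (-(δ*s)) := mul_le_mul_of_nonneg_left h3 h4
  have hexp1 : ∀ ξ ≥ (0:ℝ), Real.exp (-(δ*ξ)) ≤ 1 := by
    intro ξ hξ
    have h := Real.exp_le_exp.mpr (show -(δ*ξ) ≤ 0 by nlinarith)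
    rwa [Real.exp_zero] at h
  have hp1 : (1:ℝ) ≤ 2*σ+1 := by linarith
  rw [IntegrableOn]
  apply Integrable.mono'
    (g := fun ξ : ℝ => ((C^2 + Mφ*C^(2*σ+1)) * B) * Real.exp (-(δ/2)*ξ))
  · exact (exp_neg_integrableOn_Ioi 0 (half_pos hδ)).const_mul _
  · apply ContinuousOn.aestronglyMeasurable _ measurableSet_Ioi
    have c1 : ContinuousOn (deriv G.R) (Set.Ioi 0) :=
      (G.smooth_R.mono Set.Ioi_subset_Ici_self).continuousOn_deriv_of_isOpen isOpen_Ioi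
        (by norm_num)
    have c2 : ContinuousOn G.phi (Set.Ioi 0) :=
      G.smooth_phi.continuousOn.mono Set.Ioi_subset_Ici_self
    have c3 : ContinuousOn (fun ξ => G.R ξ ^ (2*σ+1)) (Set.Ioi 0) :=
      (G.smooth_R.continuousOn.mono Set.Ioi_subset_Ici_self).rpow_const
        (fun x hx => Or.inl (G.R_pos x (le_of_lt hx)).ne')
    exact ((c1.pow 2).sub ((c2.mul c3).div_const _)).mul (continuous_pow (n+1)).continuousOn
  · filter_upwards [ae_restrict_mem measurableSet_Ioi] with ξ hξ
    have hξ0 : (0:ℝ) ≤ ξ := le_of_lt hξ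
    have he := hexp1 ξ hξ0
    have he0 := Real.exp_nonneg (-(δ*ξ))
    have hR0 : (0:ℝ) ≤ G.R ξ ^ (2*σ+1) := Real.rpow_nonneg (G.R_pos ξ hξ0).le _
    have hdR2 : (deriv G.R ξ)^2 ≤ C^2 * Real.exp (-(δ*ξ)) := by
      nlinarith [mul_self_le_mul_self (abs_nonneg (deriv G.R ξ)) (hR'b ξ hξ0),
        sq_abs (deriv G.R ξ), mul_nonneg he0 (sub_nonneg.mpr he), sq_nonneg C]
    have hterm2 : |G.phi ξ * G.R ξ ^ (2*σ+1)/(2*σ+1)|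
        ≤ Mφ * (C^(2*σ+1) * Real.exp (-(δ*ξ))) := by
      rw [abs_div, abs_mul, abs_of_nonneg hR0,
        abs_of_nonneg (by linarith : (0:ℝ) ≤ 2*σ+1)]
      calc |G.phi ξ| * G.R ξ ^ (2*σ+1) / (2*σ+1) ≤ |G.phi ξ| * G.R ξ ^ (2*σ+1) :=
            div_le_self (by positivity) hp1
        _ ≤ Mφ * (C^(2*σ+1) * Real.exp (-(δ*ξ))) :=
            mul_le_mul (hMφ ξ hξ0) (hRpb ξ hξ0) hR0 hMφ0.le
    have h1 : |(deriv G.R ξ)^2 - G.phi ξ * G.R ξ ^ (2*σ+1)/(2*σ+1)|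
        ≤ (C^2 + Mφ*C^(2*σ+1)) * Real.exp (-(δ*ξ)) := by
      have htri : |(deriv G.R ξ)^2 - G.phi ξ * G.R ξ ^ (2*σ+1)/(2*σ+1)|
          ≤ |(deriv G.R ξ)^2| + |G.phi ξ * G.R ξ ^ (2*σ+1)/(2*σ+1)| := by
        rw [sub_eq_add_neg]
        exact (abs_add_le _ _).trans (by rw [abs_neg])
      have habs2 : |(deriv G.R ξ)^2| = (deriv G.R ξ)^2 := abs_of_nonneg (sq_nonneg _)
      have hexpand : (C^2 + Mφ*C^(2*σ+1)) * Real.exp (-(δ*ξ))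
          = C^2 * Real.exp (-(δ*ξ)) + Mφ*(C^(2*σ+1) * Real.exp (-(δ*ξ))) := by ring
      rw [hexpand]
      linarith
    have heq : Real.exp (-(δ*ξ)) = Real.exp (-(δ/2*ξ)) * Real.exp (-(δ/2)*ξ) := by
      rw [← Real.exp_add]; ring_nf
    have hnn : (0:ℝ) ≤ C^2 + Mφ*C^(2*σ+1) := by
      have := Real.rpow_nonneg hC.le (2*σ+1)
      nlinarith [sq_nonneg C]
    calc ‖((deriv G.R ξ)^2 - G.phi ξ * G.R ξ ^ (2*σ+1)/(2*σ+1)) * ξ^(n+1)‖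
        = |(deriv G.R ξ)^2 - G.phi ξ * G.R ξ ^ (2*σ+1)/(2*σ+1)| * ξ^(n+1) := by
          rw [Real.norm_eq_abs, abs_mul, abs_pow, abs_of_nonneg hξ0]
      _ ≤ ((C^2 + Mφ*C^(2*σ+1)) * Real.exp (-(δ*ξ))) * ξ^(n+1) :=
          mul_le_mul_of_nonneg_right h1 (by positivity)
      _ = (C^2 + Mφ*C^(2*σ+1)) * (ξ^(n+1) * Real.exp (-(δ/2*ξ))) * Real.exp (-(δ/2)*ξ) := by
          rw [heq]; ring
      _ ≤ (C^2 + Mφ*C^(2*σ+1)) * B * Real.exp (-(δ/2)*ξ) := by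
          apply mul_le_mul_of_nonneg_right _ (Real.exp_nonneg _)
          exact mul_le_mul_of_nonneg_left (hB ξ hξ0) hnn
      _ = ((C^2 + Mφ*C^(2*σ+1)) * B) * Real.exp (-(δ/2)*ξ) := by ring


/-- Lemma 4.2, identity (E:R1): zero Hamiltonian / Pohozaev identity for the
L²-critical ground state (`σ = 2/d`, `V(R) = φ_R R^{2σ+1}`). -/
theorem groundState_zero_hamiltonian
    (d : ℕ) (σ : ℝ) (hd : 3 ≤ d) (hσ : σ = 2 / (d : ℝ))
    (G : RadialGroundState d σ) :
    ∫ ξ in Set.Ioi (0 : ℝ),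
        ((deriv G.R ξ) ^ 2 - G.phi ξ * G.R ξ ^ (2 * σ + 1) / (2 * σ + 1)) * ξ ^ (d - 1) = 0 := by

  obtain ⟨n, rfl⟩ : ∃ n, d = n + 2 := ⟨d - 2, by omega⟩
  have hn : 1 ≤ n := by omega
  have hσ' : σ = 2 / ((n:ℝ) + 2) := by rw [hσ]; push_cast; ring_nf
  have hσ0 : 0 < σ := by rw [hσ']; positivity
  obtain ⟨C, δ, hC, hδ, hdec⟩ := G.decay
  have key := integral_Ioi_of_hasDerivAt_of_tendsto (a := (0:ℝ))
    (f := Wfun n σ G)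
    (f' := fun ξ => ((deriv G.R ξ)^2 - G.phi ξ * G.R ξ ^ (2*σ+1)/(2*σ+1)) * ξ^(n+1))
    (Wfun_cont0 G) (fun ξ hξ => hasDerivAt_W hσ' G hξ)
    (T_integrable G hσ0 hC hδ hdec) (Wfun_top G hn hσ0 hC hδ hdec)
  rw [Wfun_zero] at key
  simpa using key

end
end

section
/- (Logarithmically weighted Pohozaev identity, third identity in the proof of Lemma 4.2) Let (R, φ_R) be a radial ground state. Then −∫₀^∞ ( R'(ξ)² + R(ξ)² − V(R)(ξ) )·ξ^{d−1}·ln ξ dξ = ∫₀^∞ R(ξ)·(R'(ξ)/ξ)·ξ^{d−1} dξ. -/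
open MeasureTheory Set Filter

noncomputable section

lemma myTendstoPowExp {n : ℕ} {b : ℝ} (hb : 0 < b) :
    Tendsto (fun x : ℝ => x ^ n * Real.exp (-b * x)) atTop (nhds 0) := by
  have h1 : Tendsto (fun x : ℝ => b * x) atTop atTop :=
    Tendsto.const_mul_atTop hb tendsto_id
  have h2 := (Real.tendsto_pow_mul_exp_neg_atTop_nhds_zero n).comp h1
  have h3 : Tendsto (fun x : ℝ => (b⁻¹) ^ n * ((b * x) ^ n * Real.exp (-(b * x)))) atTop
      (nhds 0) := by simpa using h2.const_mul ((b⁻¹) ^ n)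
  refine h3.congr fun x => ?_
  field_simp [mul_pow, neg_mul]
  ring_nf
  rw [← mul_pow, mul_inv_cancel₀ hb.ne', one_pow, one_mul]

lemma myBddOfTendsto {f : ℝ → ℝ} (hf : ContinuousOn f (Ici 0))
    (hl : Tendsto f atTop (nhds 0)) : ∃ M : ℝ, 0 < M ∧ ∀ ξ ≥ (0:ℝ), |f ξ| ≤ M := by
  have h1 : ∀ᶠ ξ in atTop, |f ξ| < 1 := by
    have := hl.eventually (eventually_abs_sub_lt 0 one_pos)
    simpa using this
  obtain ⟨N, hN⟩ := h1.exists_forall_of_atTop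
  obtain ⟨M0, hM0⟩ := (isCompact_Icc (a := (0:ℝ)) (b := max N 0)).exists_bound_of_continuousOn
    (hf.mono (by intro x hx; exact hx.1))
  refine ⟨max M0 1 + 1, by positivity, fun ξ hξ => ?_⟩
  rcases le_or_gt ξ (max N 0) with h | h
  · have := hM0 ξ ⟨hξ, h⟩
    rw [Real.norm_eq_abs] at this
    have : |f ξ| ≤ max M0 1 := this.trans (le_max_left _ _)
    linarith
  · have := hN ξ (le_of_lt (lt_of_le_of_lt (le_max_left N 0) h))
    have h2 : (1:ℝ) ≤ max M0 1 := le_max_right _ _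
    linarith

lemma myIntAux {h : ℝ → ℝ} (hc : ContinuousOn h (Ioi 0)) {A c : ℝ} (hc0 : 0 < c)
    (h1 : ∀ ξ ∈ Ioc (0:ℝ) 1, |h ξ| ≤ A)
    (h2 : ∀ ξ : ℝ, 1 ≤ ξ → |h ξ| ≤ A * Real.exp (-c * ξ)) :
    IntegrableOn h (Ioi 0) := by
  rw [show Ioi (0:ℝ) = Ioc 0 1 ∪ Ioi 1 from (Ioc_union_Ioi_eq_Ioi zero_le_one).symm,
    integrableOn_union]
  constructor
  · refine Integrable.mono' (g := fun _ => A)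
      (integrableOn_const measure_Ioc_lt_top.ne)
      ((hc.mono Ioc_subset_Ioi_self).aestronglyMeasurable measurableSet_Ioc) ?_
    exact (ae_restrict_iff' measurableSet_Ioc).2 (Filter.Eventually.of_forall fun x hx => by
      rw [Real.norm_eq_abs]; exact h1 x hx)
  · refine Integrable.mono' ((exp_neg_integrableOn_Ioi 1 hc0).const_mul A)
      ((hc.mono (Ioi_subset_Ioi zero_le_one)).aestronglyMeasurable measurableSet_Ioi) ?_
    exact (ae_restrict_iff' measurableSet_Ioi).2 (Filter.Eventually.of_forall fun x hx => by
      rw [Real.norm_eq_abs]; exact h2 x (le_of_lt hx))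

set_option maxHeartbeats 2000000 in
/-- Logarithmically weighted Pohozaev identity (third identity in the proof of Lemma 4.2). -/
theorem groundState_log_pohozaev
    (d : ℕ) (σ : ℝ) (hd : 3 ≤ d) (hσ : σ = 2 / (d : ℝ))
    (G : RadialGroundState d σ) :
    -(∫ ξ in Set.Ioi (0 : ℝ),
        ((deriv G.R ξ) ^ 2 + G.R ξ ^ 2 - G.phi ξ * G.R ξ ^ (2 * σ + 1))
          * ξ ^ (d - 1) * Real.log ξ)
      = ∫ ξ in Set.Ioi (0 : ℝ), G.R ξ * (deriv G.R ξ / ξ) * ξ ^ (d - 1) := by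
  obtain ⟨C, δ, hC, hδ, hdecay⟩ := G.decay
  have hdpos : (0:ℝ) < d := by
    have : 0 < d := by omega
    exact_mod_cast this
  have hσ0 : 0 < σ := by rw [hσ]; exact div_pos two_pos hdpos
  -- derivative facts
  have hRd : ∀ ξ : ℝ, 0 < ξ → HasDerivAt G.R (deriv G.R ξ) ξ := by
    intro ξ hξ
    have hnb : Ici (0:ℝ) ∈ nhds ξ :=
      mem_of_superset (isOpen_Ioi.mem_nhds hξ) Ioi_subset_Ici_self
    exact ((G.smooth_R.contDiffAt hnb).differentiableAt (by norm_num)).hasDerivAt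
  have hC1 : ContDiffOn ℝ 1 (deriv G.R) (Ioi 0) :=
    (G.smooth_R.mono Ioi_subset_Ici_self).deriv_of_isOpen isOpen_Ioi (by norm_num)
  have hR2 : ∀ ξ : ℝ, 0 < ξ → HasDerivAt (deriv G.R) (deriv (deriv G.R) ξ) ξ := by
    intro ξ hξ
    exact ((hC1.contDiffAt (isOpen_Ioi.mem_nhds hξ)).differentiableAt one_ne_zero).hasDerivAt
  have hRc : ContinuousOn G.R (Ioi 0) := G.smooth_R.continuousOn.mono Ioi_subset_Ici_self
  have hR'c : ContinuousOn (deriv G.R) (Ioi 0) := hC1.continuousOn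
  have hφc : ContinuousOn G.phi (Ioi 0) := G.smooth_phi.continuousOn.mono Ioi_subset_Ici_self
  -- bounds
  have hRb : ∀ ξ ≥ (0:ℝ), |G.R ξ| ≤ C * Real.exp (-δ*ξ) := by
    intro ξ hξ
    have := hdecay ξ hξ
    have := abs_nonneg (deriv G.R ξ)
    linarith
  have hR'b : ∀ ξ ≥ (0:ℝ), |deriv G.R ξ| ≤ C * Real.exp (-δ*ξ) := by
    intro ξ hξ
    have := hdecay ξ hξ
    have := abs_nonneg (G.R ξ)
    linarith
  have hexp1 : ∀ ξ ≥ (0:ℝ), Real.exp (-δ*ξ) ≤ 1 := by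
    intro ξ hξ
    calc Real.exp (-δ*ξ) ≤ Real.exp 0 := Real.exp_le_exp.2 (by nlinarith)
      _ = 1 := Real.exp_zero
  have hRC : ∀ ξ ≥ (0:ℝ), |G.R ξ| ≤ C := by
    intro ξ hξ
    have h1 := hRb ξ hξ
    have h2 := hexp1 ξ hξ
    nlinarith [Real.exp_pos (-δ*ξ)]
  have hR'C : ∀ ξ ≥ (0:ℝ), |deriv G.R ξ| ≤ C := by
    intro ξ hξ
    have h1 := hR'b ξ hξ
    have h2 := hexp1 ξ hξ
    nlinarith [Real.exp_pos (-δ*ξ)]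
  obtain ⟨M, hM, hφb⟩ := myBddOfTendsto G.smooth_phi.continuousOn G.phi_lim
  set K : ℝ := (max C 1) ^ (2*σ) with hKdef
  have hK0 : 0 < K := Real.rpow_pos_of_pos (lt_of_lt_of_le zero_lt_one (le_max_right C 1)) _
  have hK : ∀ ξ ≥ (0:ℝ), G.R ξ ^ (2*σ) ≤ K := by
    intro ξ hξ
    apply Real.rpow_le_rpow (le_of_lt (G.R_pos ξ hξ))
    · exact le_trans (le_abs_self _) (le_trans (hRC ξ hξ) (le_max_left C 1))
    · positivity
  -- bound the nonlinear term
  have hV : ∀ ξ ≥ (0:ℝ), |G.phi ξ * G.R ξ ^ (2*σ+1)| ≤ M * (K * (C * Real.exp (-δ*ξ))) := by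
    intro ξ hξ
    have hRp := G.R_pos ξ hξ
    have hpow : G.R ξ ^ (2*σ+1) = G.R ξ ^ (2*σ) * G.R ξ := by
      rw [Real.rpow_add hRp, Real.rpow_one]
    rw [hpow, abs_mul, abs_of_nonneg (by positivity : (0:ℝ) ≤ G.R ξ ^ (2*σ) * G.R ξ)]
    have h1 : |G.phi ξ| ≤ M := hφb ξ hξ
    have h2 : G.R ξ ^ (2*σ) ≤ K := hK ξ hξ
    have h3 : G.R ξ ≤ C * Real.exp (-δ*ξ) := le_trans (le_abs_self _) (hRb ξ hξ)
    have h4 : (0:ℝ) ≤ G.R ξ ^ (2*σ) := by positivity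
    have h5 : (0:ℝ) ≤ G.R ξ := le_of_lt hRp
    have h6 : (0:ℝ) ≤ |G.phi ξ| := abs_nonneg _
    calc |G.phi ξ| * (G.R ξ ^ (2*σ) * G.R ξ)
        ≤ M * (G.R ξ ^ (2*σ) * G.R ξ) := mul_le_mul_of_nonneg_right h1 (by positivity)
      _ ≤ M * (K * (C * Real.exp (-δ*ξ))) :=
          mul_le_mul_of_nonneg_left (mul_le_mul h2 h3 h5 hK0.le) hM.le
  set A0 : ℝ := C*C + C*C + M*(K*C) with hA0def
  have hA0pos : 0 < A0 := by positivity
  have hmaster : ∀ ξ ≥ (0:ℝ),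
      |(deriv G.R ξ)^2 + G.R ξ^2 - G.phi ξ * G.R ξ^(2*σ+1)| ≤ A0 * Real.exp (-δ*ξ) := by
    intro ξ hξ
    have hb1 : (deriv G.R ξ)^2 ≤ C*C * Real.exp (-δ*ξ) := by
      have h1 := hR'b ξ hξ
      have h2 := hexp1 ξ hξ
      nlinarith [sq_abs (deriv G.R ξ), abs_nonneg (deriv G.R ξ), Real.exp_pos (-δ*ξ)]
    have hb2 : (G.R ξ)^2 ≤ C*C * Real.exp (-δ*ξ) := by
      have h1 := hRb ξ hξ
      have h2 := hexp1 ξ hξ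
      nlinarith [sq_abs (G.R ξ), abs_nonneg (G.R ξ), Real.exp_pos (-δ*ξ)]
    have hb3 := hV ξ hξ
    have hb4 := le_abs_self (G.phi ξ * G.R ξ^(2*σ+1))
    have hb5 := neg_abs_le (G.phi ξ * G.R ξ^(2*σ+1))
    rw [abs_le]
    constructor
    · nlinarith [sq_nonneg (deriv G.R ξ), sq_nonneg (G.R ξ)]
    · nlinarith [sq_nonneg (deriv G.R ξ), sq_nonneg (G.R ξ)]
  obtain ⟨B2, hB2, hB2b⟩ := myBddOfTendsto
    (f := fun ξ => ξ^d * Real.exp (-(δ/2)*ξ))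
    (((continuous_pow d).mul (Real.continuous_exp.comp (continuous_const.mul continuous_id))).continuousOn)
    (myTendstoPowExp (half_pos hδ))
  have hB2' : ∀ ξ ≥ (0:ℝ), ξ^d * Real.exp (-(δ/2)*ξ) ≤ B2 := by
    intro ξ hξ
    have := hB2b ξ hξ
    exact le_trans (le_abs_self _) this
  have hTail : ∀ ξ : ℝ, 1 ≤ ξ → Real.exp (-δ*ξ) * ξ^d ≤ B2 * Real.exp (-(δ/2)*ξ) := by
    intro ξ hξ
    have hξ0 : (0:ℝ) ≤ ξ := le_trans zero_le_one hξ
    have hsplit : Real.exp (-δ*ξ) = Real.exp (-(δ/2)*ξ) * Real.exp (-(δ/2)*ξ) := by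
      rw [← Real.exp_add]; ring_nf
    rw [hsplit]
    have h1 := hB2' ξ hξ0
    nlinarith [Real.exp_pos (-(δ/2)*ξ), pow_nonneg hξ0 d]
  -- the key derivative identity
  have hF : ∀ ξ ∈ Ioi (0:ℝ), HasDerivAt (fun x => x^(d-1) * deriv G.R x * G.R x * Real.log x)
      (((deriv G.R ξ)^2 + G.R ξ^2 - G.phi ξ * G.R ξ^(2*σ+1)) * ξ^(d-1) * Real.log ξ
        + G.R ξ * (deriv G.R ξ / ξ) * ξ^(d-1)) ξ := by
    intro ξ hξ
    rw [mem_Ioi] at hξ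
    have h1 := hasDerivAt_pow (d-1) ξ
    have h2 := hRd ξ hξ
    have h3 := hR2 ξ hξ
    have h4 := Real.hasDerivAt_log (ne_of_gt hξ)
    have h5 := ((h1.mul h3).mul h2).mul h4
    refine HasDerivAt.congr_deriv h5 ?_
    have heq : deriv (deriv G.R) ξ
        = G.R ξ - G.phi ξ * G.R ξ^(2*σ) - ((d:ℝ)-1)/ξ * deriv G.R ξ := by
      have := G.R_eq ξ hξ; linarith
    rw [heq]
    have hpow : G.R ξ ^ (2*σ+1) = G.R ξ ^ (2*σ) * G.R ξ := by
      rw [Real.rpow_add (G.R_pos ξ (le_of_lt hξ)), Real.rpow_one]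
    rw [hpow]
    obtain ⟨k, rfl⟩ : ∃ k, d = k + 3 := ⟨d - 3, by omega⟩
    have e1 : k + 3 - 1 = k + 2 := rfl
    rw [e1, show k + 2 - 1 = k + 1 from rfl, pow_succ ξ (k+1)]
    have hξ0 : ξ ≠ 0 := ne_of_gt hξ
    simp only [Pi.mul_apply]
    push_cast
    field_simp
    ring
  -- log bounds
  have hlog01 : ∀ ξ ∈ Ioc (0:ℝ) 1, ξ^(d-1) * |Real.log ξ| ≤ 1 := by
    intro ξ hx
    have e : ξ^(d-1) = ξ^(d-2) * ξ := by rw [← pow_succ]; congr 1; omega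
    have h1 : ξ^(d-2) ≤ 1 := pow_le_one₀ hx.1.le hx.2
    have h2 : |Real.log ξ * ξ| ≤ 1 := (Real.abs_log_mul_self_lt ξ hx.1 hx.2).le
    have h3 : |Real.log ξ| * ξ ≤ 1 := by
      have e2 : |Real.log ξ| * ξ = |Real.log ξ * ξ| := by rw [abs_mul, abs_of_pos hx.1]
      rw [e2]; exact h2
    calc ξ^(d-1) * |Real.log ξ| = ξ^(d-2) * (|Real.log ξ| * ξ) := by rw [e]; ring
      _ ≤ 1 * 1 := mul_le_mul h1 h3 (mul_nonneg (abs_nonneg _) hx.1.le) zero_le_one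
      _ = 1 := mul_one 1
  have hpowd : ∀ ξ : ℝ, ξ^(d-1) * ξ = ξ^d := by
    intro ξ
    conv_rhs => rw [show d = (d-1)+1 from by omega, pow_succ]
  have hlogtail : ∀ ξ : ℝ, 1 ≤ ξ → ξ^(d-1) * |Real.log ξ| ≤ ξ^d := by
    intro ξ hξ1
    have h0 : (0:ℝ) < ξ := lt_of_lt_of_le zero_lt_one hξ1
    have hl : |Real.log ξ| ≤ ξ := by
      rw [abs_of_nonneg (Real.log_nonneg hξ1)]
      linarith [Real.log_le_sub_one_of_pos h0]
    calc ξ^(d-1) * |Real.log ξ| ≤ ξ^(d-1) * ξ :=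
          mul_le_mul_of_nonneg_left hl (pow_nonneg h0.le _)
      _ = ξ^d := hpowd ξ
  -- continuity of the two integrands
  have hcont1 : ContinuousOn (fun ξ : ℝ =>
      ((deriv G.R ξ)^2 + G.R ξ^2 - G.phi ξ * G.R ξ^(2*σ+1)) * ξ^(d-1) * Real.log ξ)
      (Ioi 0) := by
    apply ContinuousOn.mul
    apply ContinuousOn.mul
    · exact ((hR'c.pow 2).add (hRc.pow 2)).sub
        (hφc.mul (hRc.rpow_const fun x hx => Or.inl (ne_of_gt (G.R_pos x (le_of_lt hx)))))
    · exact (continuous_pow _).continuousOn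
    · exact Real.continuousOn_log.mono (fun x hx => by simp [ne_of_gt (mem_Ioi.mp hx)])
  have hcont2 : ContinuousOn (fun ξ : ℝ => G.R ξ * (deriv G.R ξ / ξ) * ξ^(d-1)) (Ioi 0) := by
    apply ContinuousOn.mul
    · exact hRc.mul (hR'c.div continuousOn_id (fun x hx => ne_of_gt hx))
    · exact (continuous_pow _).continuousOn
  -- integrability
  have hI1 : IntegrableOn (fun ξ : ℝ =>
      ((deriv G.R ξ)^2 + G.R ξ^2 - G.phi ξ * G.R ξ^(2*σ+1)) * ξ^(d-1) * Real.log ξ)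
      (Ioi 0) := by
    apply myIntAux hcont1 (half_pos hδ) (A := A0 * (1 + B2))
    · intro ξ hx
      have h0 : (0:ℝ) < ξ := hx.1
      have habs : |((deriv G.R ξ)^2 + G.R ξ^2 - G.phi ξ * G.R ξ^(2*σ+1)) * ξ^(d-1) * Real.log ξ|
          = |(deriv G.R ξ)^2 + G.R ξ^2 - G.phi ξ * G.R ξ^(2*σ+1)| * (ξ^(d-1) * |Real.log ξ|) := by
        rw [abs_mul, abs_mul, abs_pow, abs_of_pos h0]; ring
      rw [habs]
      calc |(deriv G.R ξ)^2 + G.R ξ^2 - G.phi ξ * G.R ξ^(2*σ+1)| * (ξ^(d-1) * |Real.log ξ|)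
          ≤ (A0 * Real.exp (-δ*ξ)) * 1 :=
            mul_le_mul (hmaster ξ h0.le) (hlog01 ξ hx)
              (mul_nonneg (pow_nonneg h0.le _) (abs_nonneg _))
              (mul_nonneg hA0pos.le (Real.exp_pos _).le)
        _ ≤ A0 * 1 := by nlinarith [hexp1 ξ h0.le, hA0pos]
        _ ≤ A0 * (1 + B2) := by nlinarith [hA0pos, hB2]
    · intro ξ hξ1
      have h0 : (0:ℝ) < ξ := lt_of_lt_of_le zero_lt_one hξ1
      have habs : |((deriv G.R ξ)^2 + G.R ξ^2 - G.phi ξ * G.R ξ^(2*σ+1)) * ξ^(d-1) * Real.log ξ|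
          = |(deriv G.R ξ)^2 + G.R ξ^2 - G.phi ξ * G.R ξ^(2*σ+1)| * (ξ^(d-1) * |Real.log ξ|) := by
        rw [abs_mul, abs_mul, abs_pow, abs_of_pos h0]; ring
      rw [habs]
      calc |(deriv G.R ξ)^2 + G.R ξ^2 - G.phi ξ * G.R ξ^(2*σ+1)| * (ξ^(d-1) * |Real.log ξ|)
          ≤ (A0 * Real.exp (-δ*ξ)) * ξ^d :=
            mul_le_mul (hmaster ξ h0.le) (hlogtail ξ hξ1)
              (mul_nonneg (pow_nonneg h0.le _) (abs_nonneg _))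
              (mul_nonneg hA0pos.le (Real.exp_pos _).le)
        _ = A0 * (Real.exp (-δ*ξ) * ξ^d) := by ring
        _ ≤ A0 * (B2 * Real.exp (-(δ/2)*ξ)) :=
            mul_le_mul_of_nonneg_left (hTail ξ hξ1) hA0pos.le
        _ ≤ (A0 * (1 + B2)) * Real.exp (-(δ/2)*ξ) := by
            nlinarith [Real.exp_pos (-(δ/2)*ξ), hA0pos]
  have hf2eq : ∀ ξ : ℝ, 0 < ξ →
      G.R ξ * (deriv G.R ξ / ξ) * ξ^(d-1) = G.R ξ * deriv G.R ξ * ξ^(d-2) := by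
    intro ξ h0
    rw [show d-1 = (d-2)+1 from by omega, pow_succ]
    field_simp
  have hI2 : IntegrableOn (fun ξ : ℝ => G.R ξ * (deriv G.R ξ / ξ) * ξ^(d-1)) (Ioi 0) := by
    apply myIntAux hcont2 (half_pos hδ) (A := C * C * (1 + B2))
    · intro ξ hx
      have h0 : (0:ℝ) < ξ := hx.1
      rw [hf2eq ξ h0, abs_mul, abs_mul, abs_pow, abs_of_pos h0]
      have h1 : ξ^(d-2) ≤ 1 := pow_le_one₀ h0.le hx.2
      calc |G.R ξ| * |deriv G.R ξ| * ξ^(d-2)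
          ≤ (C * C) * 1 := by
            apply mul_le_mul _ h1 (pow_nonneg h0.le _) (mul_nonneg hC.le hC.le)
            exact mul_le_mul (hRC ξ h0.le) (hR'C ξ h0.le) (abs_nonneg _) hC.le
        _ ≤ C * C * (1 + B2) := by nlinarith [hB2, hC]
    · intro ξ hξ1
      have h0 : (0:ℝ) < ξ := lt_of_lt_of_le zero_lt_one hξ1
      rw [hf2eq ξ h0, abs_mul, abs_mul, abs_pow, abs_of_pos h0]
      have h1 : ξ^(d-2) ≤ ξ^d := pow_le_pow_right₀ hξ1 (by omega)
      calc |G.R ξ| * |deriv G.R ξ| * ξ^(d-2)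
          ≤ (C * (C * Real.exp (-δ*ξ))) * ξ^d := by
            apply mul_le_mul _ h1 (pow_nonneg h0.le _)
              (mul_nonneg hC.le (mul_nonneg hC.le (Real.exp_pos _).le))
            exact mul_le_mul (hRC ξ h0.le) (hR'b ξ h0.le) (abs_nonneg _) hC.le
        _ = (C*C) * (Real.exp (-δ*ξ) * ξ^d) := by ring
        _ ≤ (C*C) * (B2 * Real.exp (-(δ/2)*ξ)) :=
            mul_le_mul_of_nonneg_left (hTail ξ hξ1) (mul_nonneg hC.le hC.le)
        _ ≤ (C * C * (1 + B2)) * Real.exp (-(δ/2)*ξ) := by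
            nlinarith [Real.exp_pos (-(δ/2)*ξ), hC]
  -- boundary value and limits of F
  have hF0 : (0:ℝ)^(d-1) * deriv G.R 0 * G.R 0 * Real.log 0 = 0 := by
    rw [zero_pow (by omega : d-1 ≠ 0)]; ring
  have hcontF : ContinuousWithinAt
      (fun x : ℝ => x^(d-1) * deriv G.R x * G.R x * Real.log x) (Ici 0) 0 := by
    rw [← continuousWithinAt_diff_self, Ici_sdiff_left]
    have hg : Tendsto (fun x : ℝ => (C*C) * |Real.log x * x^(d-1)|)
        (nhdsWithin 0 (Ioi 0)) (nhds 0) := by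
      have hdm : (0:ℝ) < ((d-1:ℕ):ℝ) := by
        have : 0 < d - 1 := by omega
        exact_mod_cast this
      have h1 : Tendsto (fun x : ℝ => Real.log x * x^(d-1)) (nhdsWithin 0 (Ioi 0)) (nhds 0) := by
        refine (tendsto_log_mul_rpow_nhdsGT_zero hdm).congr fun x => ?_
        rw [Real.rpow_natCast]
      simpa using (h1.abs.const_mul (C*C))
    show Tendsto _ (nhdsWithin 0 (Ioi 0))
      (nhds ((0:ℝ)^(d-1) * deriv G.R 0 * G.R 0 * Real.log 0))
    rw [hF0]
    apply squeeze_zero_norm' _ hg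
    filter_upwards [self_mem_nhdsWithin] with ξ hξ
    rw [mem_Ioi] at hξ
    rw [Real.norm_eq_abs]
    have habs : |ξ^(d-1) * deriv G.R ξ * G.R ξ * Real.log ξ|
        = ξ^(d-1) * |deriv G.R ξ| * |G.R ξ| * |Real.log ξ| := by
      rw [abs_mul, abs_mul, abs_mul, abs_pow, abs_of_pos hξ]
    rw [habs]
    have hm : |deriv G.R ξ| * |G.R ξ| ≤ C * C :=
      mul_le_mul (hR'C ξ hξ.le) (hRC ξ hξ.le) (abs_nonneg _) hC.le
    calc ξ^(d-1) * |deriv G.R ξ| * |G.R ξ| * |Real.log ξ|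
        = (|deriv G.R ξ| * |G.R ξ|) * (ξ^(d-1) * |Real.log ξ|) := by ring
      _ ≤ (C*C) * (ξ^(d-1) * |Real.log ξ|) := mul_le_mul_of_nonneg_right hm
          (mul_nonneg (pow_nonneg hξ.le _) (abs_nonneg _))
      _ = (C*C) * |Real.log ξ * ξ^(d-1)| := by
          rw [abs_mul, abs_pow, abs_of_pos hξ]; ring
  have hTendF : Tendsto (fun x : ℝ => x^(d-1) * deriv G.R x * G.R x * Real.log x)
      atTop (nhds 0) := by
    have hg : Tendsto (fun ξ : ℝ => (C*C) * (ξ^d * Real.exp (-δ*ξ))) atTop (nhds 0) := by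
      simpa using (myTendstoPowExp (n := d) hδ).const_mul (C*C)
    apply squeeze_zero_norm' _ hg
    filter_upwards [eventually_ge_atTop 1] with ξ hξ1
    have h0 : (0:ℝ) < ξ := lt_of_lt_of_le zero_lt_one hξ1
    rw [Real.norm_eq_abs]
    have habs : |ξ^(d-1) * deriv G.R ξ * G.R ξ * Real.log ξ|
        = ξ^(d-1) * |deriv G.R ξ| * |G.R ξ| * |Real.log ξ| := by
      rw [abs_mul, abs_mul, abs_mul, abs_pow, abs_of_pos h0]
    rw [habs]
    have hm : |deriv G.R ξ| * |G.R ξ| ≤ (C * Real.exp (-δ*ξ)) * C :=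
      mul_le_mul (hR'b ξ h0.le) (hRC ξ h0.le) (abs_nonneg _)
        (mul_nonneg hC.le (Real.exp_pos _).le)
    calc ξ^(d-1) * |deriv G.R ξ| * |G.R ξ| * |Real.log ξ|
        = (|deriv G.R ξ| * |G.R ξ|) * (ξ^(d-1) * |Real.log ξ|) := by ring
      _ ≤ ((C * Real.exp (-δ*ξ)) * C) * (ξ^d) :=
          mul_le_mul hm (hlogtail ξ hξ1)
            (mul_nonneg (pow_nonneg h0.le _) (abs_nonneg _))
            (mul_nonneg (mul_nonneg hC.le (Real.exp_pos _).le) hC.le)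
      _ = (C*C) * (ξ^d * Real.exp (-δ*ξ)) := by ring
  -- assemble
  have hI12 : IntegrableOn (fun ξ : ℝ =>
      ((deriv G.R ξ)^2 + G.R ξ^2 - G.phi ξ * G.R ξ^(2*σ+1)) * ξ^(d-1) * Real.log ξ
        + G.R ξ * (deriv G.R ξ / ξ) * ξ^(d-1)) (Ioi 0) := hI1.add hI2
  have key := integral_Ioi_of_hasDerivAt_of_tendsto hcontF hF hI12 hTendF
  rw [integral_add hI1 hI2] at key
  rw [hF0, sub_zero] at key
  linarith [key]
end
end
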